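/- Let G = (V, E) be a finite simple graph and let B ≤ |V| be a natural number. Construct the directed network G' as follows: for every edge e = {a, b} ∈ E introduce a new vertex v_e, and add the two arcs (a, v_e) and (b, v_e), each with capacity 1; the vertices v_e are sinks with unit demand, and the maximum flow value ν^max(G') is defined as the maximum, over all functions f assigning to each arc a real value in [0, 1] such that the total inflow into each sink v_e is at most 1, of the total inflow into all sinks. For R ⊆ V, let G' ∖ R denote G' with all arcs leaving vertices of R removed. Then min { ν^max(G' ∖ R) : R ⊆ V, |R| ≤ B } = |E| − max { e(W) : W ⊆ V, |W| = B }, where e(W) denotes the number of edges of G with both endpoints in W. In particular, for |R| = B, R is an optimal interdiction set for budget B if and only if R is the vertex set of a B-densest subgraph of G. -/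

import Mathlib

open scoped Classical

/-- The value of a maximum flow in the subdivision network `G'` of the simple graph `G`,
after removing all arcs leaving vertices of `R`.  The arcs of `G'` are the pairs `(a, e)`
where `a` is an endpoint of the edge `e`; each such arc has capacity `1`, goes from `a`
to the subdivision vertex `v_e`, and each subdivision vertex `v_e` is a sink that can
absorb at most one unit of flow.  The value of a flow is the total inflow into the sinks,
and `subdivMaxFlow G R` is the supremum of all flow values. -/
noncomputable def subdivMaxFlow {V : Type*} [Fintype V] [DecidableEq V]
    (G : SimpleGraph V) (R : Finset V) : ℝ :=
  sSup {x : ℝ | ∃ f : V → Sym2 V → ℝ,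
    ((∀ a e, 0 ≤ f a e ∧ f a e ≤ 1) ∧
     (∀ a e, (e ∉ G.edgeSet ∨ a ∉ e ∨ a ∈ R) → f a e = 0) ∧
     (∀ e ∈ G.edgeSet, (∑ a, f a e) ≤ 1)) ∧
    x = ∑ e : Sym2 V, ∑ a, f a e}

/-- `edgesInside G W` is the number `e(W)` of edges of `G` with both endpoints in `W`. -/
noncomputable def edgesInside {V : Type*} (G : SimpleGraph V) (W : Finset V) : ℕ :=
  {e : Sym2 V | e ∈ G.edgeSet ∧ ∀ a ∈ e, a ∈ W}.ncard


section AuxStatement0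

set_option linter.unusedSectionVars false

variable {V : Type*} [Fintype V] [DecidableEq V]

lemma aux_edgesInside_mono (G : SimpleGraph V) {W W' : Finset V} (h : W ⊆ W') :
    edgesInside G W ≤ edgesInside G W' := by
  apply Set.ncard_le_ncard
  · rintro e ⟨he, hall⟩
    exact ⟨he, fun a ha => h (hall a ha)⟩
  · exact Set.toFinite _

lemma aux_subdivMaxFlow_eq (G : SimpleGraph V) (R : Finset V) :
    subdivMaxFlow G R = (G.edgeSet.ncard : ℝ) - ((edgesInside G R : ℕ) : ℝ) := by
  unfold subdivMaxFlow edgesInside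
  set A : Finset (Sym2 V) := Finset.univ.filter (fun e => e ∈ G.edgeSet) with hA
  set Ain : Finset (Sym2 V) :=
    Finset.univ.filter (fun e => e ∈ G.edgeSet ∧ ∀ a ∈ e, a ∈ R) with hAin
  have hsub : Ain ⊆ A := by
    intro e he
    simp only [hA, hAin, Finset.mem_filter, Finset.mem_univ, true_and] at he ⊢
    exact he.1
  have hEcard : G.edgeSet.ncard = A.card := by
    rw [Set.ncard_eq_toFinset_card']
    congr 1
    ext e
    simp [hA]
  have hIcard : ({e : Sym2 V | e ∈ G.edgeSet ∧ ∀ a ∈ e, a ∈ R}).ncard = Ain.card := by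
    rw [Set.ncard_eq_toFinset_card', Set.toFinset_setOf]
  have hval : (G.edgeSet.ncard : ℝ)
      - (({e : Sym2 V | e ∈ G.edgeSet ∧ ∀ a ∈ e, a ∈ R}).ncard : ℝ)
      = ((A \ Ain).card : ℝ) := by
    rw [hEcard, hIcard, Finset.card_sdiff_of_subset hsub,
      Nat.cast_sub (Finset.card_le_card hsub)]
  rw [hval]
  apply IsGreatest.csSup_eq
  constructor
  · -- membership: an explicit optimal flow
    refine ⟨fun a e => if h : e ∈ G.edgeSet ∧ ∃ b, b ∈ e ∧ b ∉ R then
        (if a = Classical.choose h.2 then 1 else 0) else 0, ⟨?_, ?_, ?_⟩, ?_⟩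
    · intro a e
      by_cases h : e ∈ G.edgeSet ∧ ∃ b, b ∈ e ∧ b ∉ R
      · simp only [dif_pos h]
        split <;> norm_num
      · simp [h]
    · intro a e hcond
      by_cases h : e ∈ G.edgeSet ∧ ∃ b, b ∈ e ∧ b ∉ R
      · have hc := Classical.choose_spec h.2
        have : a ≠ Classical.choose h.2 := by
          rintro rfl
          rcases hcond with h1 | h2 | h3
          · exact h1 h.1
          · exact h2 hc.1
          · exact hc.2 h3
        simp only [dif_pos h, if_neg this]
      · simp [h]
    · intro e he
      by_cases h : e ∈ G.edgeSet ∧ ∃ b, b ∈ e ∧ b ∉ R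
      · simp only [dif_pos h]
        rw [Finset.sum_ite_eq' Finset.univ (Classical.choose h.2) (fun _ => (1:ℝ))]
        simp
      · simp [h]
    · have key1 : ∀ e : Sym2 V, (∑ a, (if h : e ∈ G.edgeSet ∧ ∃ b, b ∈ e ∧ b ∉ R then
          (if a = Classical.choose h.2 then (1:ℝ) else 0) else 0))
          = if e ∈ A \ Ain then 1 else 0 := by
        intro e
        by_cases h : e ∈ G.edgeSet ∧ ∃ b, b ∈ e ∧ b ∉ R
        · have he : e ∈ A \ Ain := by
            rw [Finset.mem_sdiff]
            constructor
            · simp [hA, h.1]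
            · simp only [hAin, Finset.mem_filter, Finset.mem_univ, true_and, not_and]
              intro _
              obtain ⟨b, hb1, hb2⟩ := h.2
              exact fun hall => hb2 (hall b hb1)
          simp only [dif_pos h, if_pos he]
          rw [Finset.sum_ite_eq' Finset.univ (Classical.choose h.2) (fun _ => (1:ℝ))]
          simp
        · have he : e ∉ A \ Ain := by
            intro hmem
            rw [Finset.mem_sdiff] at hmem
            push_neg at h
            apply hmem.2
            have h1 : e ∈ G.edgeSet := by
              have := hmem.1
              simpa [hA] using this
            simp only [hAin, Finset.mem_filter, Finset.mem_univ, true_and]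
            exact ⟨h1, h h1⟩
          simp [h, he]
      rw [Finset.sum_congr rfl (fun e _ => key1 e), Finset.sum_ite_mem,
        Finset.univ_inter, Finset.sum_const, nsmul_eq_mul, mul_one]
  · -- upper bound
    rintro x ⟨f, ⟨hbd, hzero, hsum⟩, rfl⟩
    have h1 : ∀ e : Sym2 V, e ∉ A \ Ain → (∑ a, f a e) = 0 := by
      intro e he
      apply Finset.sum_eq_zero
      intro a _
      by_cases hE : e ∈ G.edgeSet
      · by_cases ha : a ∈ e
        · have heA : e ∈ A := by simp [hA, hE]
          have heAin : e ∈ Ain := by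
            by_contra hc
            exact he (Finset.mem_sdiff.mpr ⟨heA, hc⟩)
          have hall : ∀ b ∈ e, b ∈ R := by
            simp only [hAin, Finset.mem_filter, Finset.mem_univ, true_and] at heAin
            exact heAin.2
          exact hzero a e (Or.inr (Or.inr (hall a ha)))
        · exact hzero a e (Or.inr (Or.inl ha))
      · exact hzero a e (Or.inl hE)
    calc (∑ e : Sym2 V, ∑ a, f a e) = ∑ e ∈ A \ Ain, ∑ a, f a e := by
          rw [← Finset.sum_subset (Finset.subset_univ (A \ Ain))]
          intro e _ he
          exact h1 e he
      _ ≤ ∑ _e ∈ A \ Ain, (1:ℝ) := by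
          apply Finset.sum_le_sum
          intro e he
          have heA : e ∈ A := (Finset.mem_sdiff.mp he).1
          have hE : e ∈ G.edgeSet := by simpa [hA] using heA
          exact hsum e hE
      _ = ((A \ Ain).card : ℝ) := by simp

end AuxStatement0

/-- Interdicting the subdivision network of a graph `G` with vertex-removal budget `B`
is the `B`-densest-subgraph problem: the minimum over all `R ⊆ V` with `|R| ≤ B` of the
maximum flow in `G' ∖ R` equals `|E| - max {e(W) : |W| = B}`; moreover a set `R` with
`|R| = B` is an optimal interdiction set iff it is the vertex set of a `B`-densest
subgraph of `G`. -/
theorem statement0 {V : Type*} [Fintype V] [DecidableEq V] (G : SimpleGraph V)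
    (B : ℕ) (hB : B ≤ Fintype.card V) :
    IsLeast {x : ℝ | ∃ R : Finset V, R.card ≤ B ∧ x = subdivMaxFlow G R}
      ((G.edgeSet.ncard : ℝ) -
        (((Finset.univ.filter fun W : Finset V => W.card = B).sup
          fun W => edgesInside G W : ℕ) : ℝ)) ∧
    ∀ R : Finset V, R.card = B →
      (subdivMaxFlow G R =
          (G.edgeSet.ncard : ℝ) -
            (((Finset.univ.filter fun W : Finset V => W.card = B).sup
              fun W => edgesInside G W : ℕ) : ℝ) ↔
        edgesInside G R =
          (Finset.univ.filter fun W : Finset V => W.card = B).sup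
            fun W => edgesInside G W) := by
  set M : ℕ := (Finset.univ.filter fun W : Finset V => W.card = B).sup
      fun W => edgesInside G W with hM
  have hfilter_ne : ((Finset.univ.filter fun W : Finset V => W.card = B)).Nonempty := by
    obtain ⟨W, _, hW⟩ := Finset.exists_subset_card_eq (s := (Finset.univ : Finset V)) (by
      simpa using hB)
    exact ⟨W, by simp [hW]⟩
  obtain ⟨W0, hW0mem, hW0⟩ :=
    Finset.exists_mem_eq_sup _ hfilter_ne (fun W : Finset V => edgesInside G W)
  have hW0card : W0.card = B := by
    simpa using (Finset.mem_filter.mp hW0mem).2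
  have hle : ∀ R : Finset V, R.card ≤ B → edgesInside G R ≤ M := by
    intro R hR
    obtain ⟨W, hRW, _, hWcard⟩ := Finset.exists_subsuperset_card_eq
      (Finset.subset_univ R) hR (by simpa using hB)
    calc edgesInside G R ≤ edgesInside G W := aux_edgesInside_mono G hRW
      _ ≤ M := Finset.le_sup (by simp [hWcard])
  constructor
  · constructor
    · exact ⟨W0, le_of_eq hW0card, by rw [aux_subdivMaxFlow_eq, ← hW0, hM]⟩
    · rintro x ⟨R, hR, rfl⟩
      rw [aux_subdivMaxFlow_eq]
      have := hle R hR
      have : ((edgesInside G R : ℕ) : ℝ) ≤ (M : ℝ) := Nat.cast_le.mpr this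
      linarith
  · intro R hR
    rw [aux_subdivMaxFlow_eq]
    constructor
    · intro h
      have : ((edgesInside G R : ℕ) : ℝ) = (M : ℝ) := by linarith
      exact_mod_cast this
    · intro h
      rw [h]
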